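/- Equivalence of population-level and individual-level no waning under sharp no waning of the placebo. Let p : {0,1}^4 → ℝ be nonnegative with total sum 1, indexing principal strata by s = (s1, s2, s3, s4) = (y1 under vaccine, y1 under placebo, y2 under vaccine, y2 under placebo). Assume sharp no waning of the placebo: p(s) = 0 whenever s2 ≠ s4. Write N1 := Σ_{s: s1=1} p(s), D1 := Σ_{s: s2=1} p(s), N2 := Σ_{s: s3=1} p(s), D2 := Σ_{s: s4=1} p(s), and assume D1 > 0. Then D1 = D2, and the equality of challenge effects 1 − N1/D1 = 1 − N2/D2 holds if and only if Σ_{s: s1=1, s3=0} p(s) = Σ_{s: s1=0, s3=1} p(s); i.e., the population-level challenge effects at the two times are equal exactly when the probability mass transitioning from helped/harmed strata in the waning direction equals the mass transitioning in the improving direction. -/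

import Mathlib

/-- Equivalence of population-level and individual-level no waning under sharp no waning of
the placebo. Strata are indexed by `(s1, s2, s3, s4)` = (interval-1 outcome under vaccine,
interval-1 outcome under placebo, interval-2 outcome under vaccine, interval-2 outcome under
placebo), with `true` playing the role of 1. -/
theorem population_vs_individual_no_waning
    (p : Bool → Bool → Bool → Bool → ℝ)
    (hnonneg : ∀ s1 s2 s3 s4, 0 ≤ p s1 s2 s3 s4)
    (hsum : ∑ s1 : Bool, ∑ s2 : Bool, ∑ s3 : Bool, ∑ s4 : Bool, p s1 s2 s3 s4 = 1)
    -- sharp no waning of the placebo: no mass on strata with s2 ≠ s4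
    (hplacebo : ∀ s1 s2 s3 s4, s2 ≠ s4 → p s1 s2 s3 s4 = 0)
    -- D1 > 0
    (hD1 : 0 < ∑ s1 : Bool, ∑ s3 : Bool, ∑ s4 : Bool, p s1 true s3 s4) :
    (∑ s1 : Bool, ∑ s3 : Bool, ∑ s4 : Bool, p s1 true s3 s4) =
      (∑ s1 : Bool, ∑ s2 : Bool, ∑ s3 : Bool, p s1 s2 s3 true) ∧
    (1 - (∑ s2 : Bool, ∑ s3 : Bool, ∑ s4 : Bool, p true s2 s3 s4) /
          (∑ s1 : Bool, ∑ s3 : Bool, ∑ s4 : Bool, p s1 true s3 s4) =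
        1 - (∑ s1 : Bool, ∑ s2 : Bool, ∑ s4 : Bool, p s1 s2 true s4) /
          (∑ s1 : Bool, ∑ s2 : Bool, ∑ s3 : Bool, p s1 s2 s3 true) ↔
      (∑ s2 : Bool, ∑ s4 : Bool, p true s2 false s4) =
        (∑ s2 : Bool, ∑ s4 : Bool, p false s2 true s4)) := by
  have h1 : ∀ s1 s3, p s1 true s3 false = 0 := fun s1 s3 => hplacebo _ _ _ _ (by simp)
  have h2 : ∀ s1 s3, p s1 false s3 true = 0 := fun s1 s3 => hplacebo _ _ _ _ (by simp)
  simp only [Fintype.sum_bool, h1, h2, add_zero, zero_add] at *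
  constructor
  · trivial
  · have hD1' : p true true true true + p true true false true + (p false true true true + p false true false true) ≠ 0 := by linarith
    rw [sub_right_inj, div_eq_div_iff hD1' hD1']
    constructor <;> intro h <;> nlinarith [h, hD1]
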